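/- Let (X, dist) be a metric space, let m ≥ 1 be an integer and ε ∈ (0,1] a real number, let k ≥ 1 and let c : Fin k → X be a set of k centers. Let p, q : Fin n → X be two families of n points (the indexing encodes a bijection π between the two point sets) such that Σ_{t<n} dist(p t, q t)^m ≤ (ε/(2m))^m · cost_m(p, c). Then |cost_m(p, c) − cost_m(q, c)| ≤ ε · cost_m(p, c). -/

import Mathlib

/-- The `k`-clustering cost of points `p` with centers `c`:
`cost_m(p, c) = Σ_t (min_i dist (p t) (c i))^m`. -/
noncomputable def clusterCost {X : Type*} [MetricSpace X] {n k : ℕ} (m : ℕ)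
    (p : Fin n → X) (c : Fin k → X) : ℝ :=
  ∑ t, (⨅ i, dist (p t) (c i)) ^ m

lemma aux_pow_add_le (m' : ℕ) {x d δ : ℝ} (hx : 0 ≤ x) (hd : 0 ≤ d) (hδ : 0 < δ) :
    (x + d) ^ (m' + 1) ≤ (1 + δ) ^ m' * x ^ (m' + 1) + ((1 + δ) / δ) ^ m' * d ^ (m' + 1) := by
  have h1δ : (0:ℝ) < 1 + δ := by linarith
  have hc := (convexOn_pow (m' + 1)).2
    (show (1+δ)*x ∈ Set.Ici (0:ℝ) by simp [Set.mem_Ici]; positivity)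
    (show ((1+δ)/δ)*d ∈ Set.Ici (0:ℝ) by simp [Set.mem_Ici]; positivity)
    (show (0:ℝ) ≤ 1/(1+δ) by positivity)
    (show (0:ℝ) ≤ δ/(1+δ) by positivity)
    (show 1/(1+δ) + δ/(1+δ) = 1 by field_simp)
  have e1 : (1/(1+δ)) • ((1+δ)*x) + (δ/(1+δ)) • (((1+δ)/δ)*d) = x + d := by
    simp only [smul_eq_mul]
    field_simp
  have e2 : (1/(1+δ)) • (((1+δ)*x)^(m'+1)) + (δ/(1+δ)) • ((((1+δ)/δ)*d)^(m'+1))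
      = (1+δ)^m' * x^(m'+1) + ((1+δ)/δ)^m' * d^(m'+1) := by
    simp only [smul_eq_mul, mul_pow, pow_succ, div_pow]
    field_simp
  rw [e1] at hc
  calc (x + d) ^ (m'+1) ≤ _ := hc
    _ = _ := e2

theorem movement_preserves_cost {X : Type*} [MetricSpace X] {n k m : ℕ}
    (hm : 1 ≤ m) (hk : 1 ≤ k) {ε : ℝ} (hε : ε ∈ Set.Ioc (0 : ℝ) 1)
    (c : Fin k → X) (p q : Fin n → X)
    (hmove : ∑ t, dist (p t) (q t) ^ m ≤ (ε / (2 * m)) ^ m * clusterCost m p c) :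
    |clusterCost m p c - clusterCost m q c| ≤ ε * clusterCost m p c := by
  obtain ⟨hε0, hε1⟩ := hε
  obtain ⟨m', rfl⟩ : ∃ m', m = m' + 1 := ⟨m - 1, (Nat.succ_pred_eq_of_pos hm).symm⟩
  haveI : Nonempty (Fin k) := Fin.pos_iff_nonempty.mp hk
  set M : ℕ := m' + 1 with hM
  set δ : ℝ := ε / (2 * (M:ℝ)) with hδdef
  have hMpos : (0:ℝ) < (M:ℝ) := by positivity
  have hδ : 0 < δ := by positivity
  set A : Fin n → ℝ := fun t => ⨅ i, dist (p t) (c i) with hA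
  set B : Fin n → ℝ := fun t => ⨅ i, dist (q t) (c i) with hB
  have hA0 : ∀ t, 0 ≤ A t := fun t => Real.iInf_nonneg fun i => dist_nonneg
  have hB0 : ∀ t, 0 ≤ B t := fun t => Real.iInf_nonneg fun i => dist_nonneg
  have hd0 : ∀ t, 0 ≤ dist (p t) (q t) := fun t => dist_nonneg
  have hABd : ∀ t, A t ≤ B t + dist (p t) (q t) := by
    intro t
    have h1 : A t - dist (p t) (q t) ≤ B t := by
      apply le_ciInf
      intro i
      have h2 : A t ≤ dist (p t) (c i) :=
        ciInf_le ((Set.finite_range _).bddBelow) i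
      have h3 := dist_triangle (p t) (q t) (c i)
      linarith
    linarith
  have hBAd : ∀ t, B t ≤ A t + dist (p t) (q t) := by
    intro t
    have h1 : B t - dist (p t) (q t) ≤ A t := by
      apply le_ciInf
      intro i
      have h2 : B t ≤ dist (q t) (c i) :=
        ciInf_le ((Set.finite_range _).bddBelow) i
      have h3 := dist_triangle (q t) (p t) (c i)
      rw [dist_comm (q t) (p t)] at h3
      linarith
    linarith
  have hcoef : (0:ℝ) ≤ (1+δ)^m' - 1 := by
    have : (1:ℝ) ≤ (1+δ)^m' := one_le_pow₀ (by linarith)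
    linarith
  have key : ∀ t, |A t ^ M - B t ^ M| ≤
      ((1+δ)^m' - 1) * A t ^ M + ((1+δ)/δ)^m' * dist (p t) (q t) ^ M := by
    intro t
    rcases le_total (A t) (B t) with h | h
    · have hpow : A t ^ M ≤ B t ^ M := pow_le_pow_left₀ (hA0 t) h M
      rw [abs_of_nonpos (by linarith)]
      have h1 : B t ^ M ≤ (A t + dist (p t) (q t)) ^ M :=
        pow_le_pow_left₀ (hB0 t) (hBAd t) M
      have h2 := aux_pow_add_le m' (hA0 t) (hd0 t) hδ
      rw [← hM] at h2
      linarith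
    · have hpow : B t ^ M ≤ A t ^ M := pow_le_pow_left₀ (hB0 t) h M
      rw [abs_of_nonneg (by linarith)]
      have h1 : A t ^ M ≤ (B t + dist (p t) (q t)) ^ M :=
        pow_le_pow_left₀ (hA0 t) (hABd t) M
      have h2 := aux_pow_add_le m' (hB0 t) (hd0 t) hδ
      rw [← hM] at h2
      nlinarith [mul_le_mul_of_nonneg_left hpow hcoef]
  have hS0 : 0 ≤ clusterCost M p c :=
    Finset.sum_nonneg fun t _ => pow_nonneg (hA0 t) M
  have hcostp : clusterCost M p c = ∑ t, A t ^ M := rfl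
  have hcostq : clusterCost M q c = ∑ t, B t ^ M := rfl
  have hsum : |clusterCost M p c - clusterCost M q c| ≤
      ((1+δ)^m' - 1) * clusterCost M p c + ((1+δ)/δ)^m' * ∑ t, dist (p t) (q t) ^ M := by
    rw [hcostp, hcostq, ← Finset.sum_sub_distrib]
    calc |∑ t, (A t ^ M - B t ^ M)| ≤ ∑ t, |A t ^ M - B t ^ M| :=
          Finset.abs_sum_le_sum_abs _ _
      _ ≤ ∑ t, (((1+δ)^m' - 1) * A t ^ M + ((1+δ)/δ)^m' * dist (p t) (q t) ^ M) :=
          Finset.sum_le_sum fun t _ => key t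
      _ = _ := by
          rw [Finset.sum_add_distrib, ← Finset.mul_sum, ← Finset.mul_sum]
  have hD : ∑ t, dist (p t) (q t) ^ M ≤ δ ^ M * clusterCost M p c := hmove
  have hK0 : (0:ℝ) ≤ ((1+δ)/δ)^m' := by positivity
  have hKδ : ((1+δ)/δ)^m' * (δ ^ M * clusterCost M p c)
      = (1+δ)^m' * δ * clusterCost M p c := by
    rw [hM, div_pow, pow_succ]
    field_simp
  have hexp : (1+δ)^M ≤ 1 + ε := by
    have h1 : (1+δ)^M ≤ Real.exp δ ^ M :=
      pow_le_pow_left₀ (by linarith) (by linarith [Real.add_one_le_exp δ]) M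
    have h2 : Real.exp δ ^ M = Real.exp ((M:ℝ) * δ) := by
      rw [← Real.exp_nat_mul]
    have h3 : (M:ℝ) * δ = ε / 2 := by
      rw [hδdef]; field_simp
    have h5 := Real.add_one_le_exp (-(ε/2))
    have h6 : Real.exp (ε/2) * Real.exp (-(ε/2)) = 1 := by
      rw [← Real.exp_add]; simp
    have h7 : Real.exp (ε/2) ≤ 1 + ε := by
      nlinarith [Real.exp_pos (-(ε/2)), Real.exp_pos (ε/2)]
    rw [h2, h3] at h1
    linarith
  have hfinal : ((1+δ)^m' - 1) * clusterCost M p c + (1+δ)^m' * δ * clusterCost M p c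
      ≤ ε * clusterCost M p c := by
    have h8 : ((1+δ)^m' - 1) + (1+δ)^m' * δ = (1+δ)^M - 1 := by
      rw [hM, pow_succ]; ring
    have h9 : ((1+δ)^M - 1) ≤ ε := by linarith
    nlinarith
  calc |clusterCost M p c - clusterCost M q c|
      ≤ ((1+δ)^m' - 1) * clusterCost M p c + ((1+δ)/δ)^m' * ∑ t, dist (p t) (q t) ^ M := hsum
    _ ≤ ((1+δ)^m' - 1) * clusterCost M p c + ((1+δ)/δ)^m' * (δ ^ M * clusterCost M p c) := by
        have := mul_le_mul_of_nonneg_left hD hK0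
        linarith
    _ = ((1+δ)^m' - 1) * clusterCost M p c + (1+δ)^m' * δ * clusterCost M p c := by rw [hKδ]
    _ ≤ ε * clusterCost M p c := hfinal
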